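/- Let γ > 0, set α = 2/γ², and let n ≥ 0 be an integer. Then for every z ∈ ℂ, (2/(πγ²))^{1/4} ∫_ℝ exp(−(x − √2·z)²/γ²) · ψ_n^α(x) dx = e_n^γ(z); that is, the RBF Segal–Bargmann transform maps the n-th normalized Hermite function ψ_n^α to the n-th RBF basis function e_n^γ. -/

import Mathlib

open MeasureTheory Complex

/-- The physicists' Hermite polynomials, via the recurrence
`H_0 = 1`, `H_{n+1}(x) = 2x·H_n(x) − H_n'(x)`. -/
noncomputable def physHermite : ℕ → Polynomial ℝ
  | 0 => 1
  | n + 1 => 2 * Polynomial.X * physHermite n - Polynomial.derivative (physHermite n)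

/-- The normalized Hermite functions
`ψ_n^α(x) = (α/π)^{1/4} (2ⁿ n!)^{−1/2} H_n(√α x) exp(−α x²/2)`. -/
noncomputable def hermiteFun (α : ℝ) (n : ℕ) (x : ℝ) : ℝ :=
  (α / Real.pi) ^ ((1 : ℝ) / 4) * (Real.sqrt (2 ^ n * n.factorial))⁻¹ *
    (physHermite n).eval (Real.sqrt α * x) * Real.exp (-α * x ^ 2 / 2)

/-- The orthonormal basis functions of the RBF space:
`e_n^γ(z) = √(2ⁿ/(γ^{2n} n!)) zⁿ exp(−z²/γ²)`. -/
noncomputable def rbfBasis (γ : ℝ) (n : ℕ) (z : ℂ) : ℂ :=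
  (Real.sqrt (2 ^ n / (γ ^ (2 * n) * n.factorial)) : ℂ) * z ^ n *
    Complex.exp (-z ^ 2 / (γ : ℂ) ^ 2)

/-- The RBF Segal–Bargmann transform
`𝔅_γψ(z) = (2/(πγ²))^{1/4} ∫_ℝ exp(−(x − √2 z)²/γ²) ψ(x) dx`. -/
noncomputable def rbfSB (γ : ℝ) (ψ : ℝ → ℂ) (z : ℂ) : ℂ :=
  (((2 / (Real.pi * γ ^ 2)) ^ ((1 : ℝ) / 4) : ℝ) : ℂ) *
    ∫ x : ℝ, Complex.exp (-((x : ℂ) - (Real.sqrt 2 : ℂ) * z) ^ 2 / (γ : ℂ) ^ 2) * ψ x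


lemma integrable_exp_quad (c d : ℝ) :
    Integrable (fun u : ℝ => Real.exp (-u ^ 2 + c * u + d)) := by
  have h := (integrable_cexp_quadratic' (b := -1) (by norm_num) (c : ℂ) (d : ℂ)).norm
  refine h.congr (Filter.Eventually.of_forall fun u => ?_)
  have h2 : (-1 : ℂ) * (u : ℂ) ^ 2 + (c : ℂ) * u + d = ((-u ^ 2 + c * u + d : ℝ) : ℂ) := by
    push_cast; ring
  show ‖cexp (-1 * (u : ℂ) ^ 2 + (c : ℂ) * u + d)‖ = _
  rw [h2, Complex.norm_exp, Complex.ofReal_re]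

lemma integrable_pow_mul_cexp (k : ℕ) (w : ℂ) :
    Integrable (fun u : ℝ => (u : ℂ) ^ k * cexp (-((u : ℂ) - w) ^ 2)) := by
  set a := w.re with ha
  set b := w.im with hb
  have hcont : Continuous fun u : ℝ => (u : ℂ) ^ k * cexp (-((u : ℂ) - w) ^ 2) := by
    fun_prop
  refine ((((integrable_exp_quad (2 * a + 1) (b ^ 2 - a ^ 2)).add
      (integrable_exp_quad (2 * a - 1) (b ^ 2 - a ^ 2))).const_mul
      (k.factorial : ℝ))).mono' hcont.aestronglyMeasurable
      (Filter.Eventually.of_forall fun u => ?_)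
  have hre : (-((u : ℂ) - w) ^ 2).re = b ^ 2 - (u - a) ^ 2 := by
    simp only [neg_re, pow_two, Complex.mul_re, Complex.sub_re, Complex.sub_im,
      Complex.ofReal_re, Complex.ofReal_im]
    ring
  have hnorm : ‖(u : ℂ) ^ k * cexp (-((u : ℂ) - w) ^ 2)‖
      = |u| ^ k * Real.exp (b ^ 2 - (u - a) ^ 2) := by
    rw [norm_mul, norm_pow, Complex.norm_real, Real.norm_eq_abs,
      Complex.norm_exp, hre]
  have h1 : |u| ^ k ≤ (k.factorial : ℝ) * (Real.exp u + Real.exp (-u)) := by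
    have h2 : |u| ^ k / (k.factorial : ℝ) ≤ Real.exp |u| :=
      Real.pow_div_factorial_le_exp (x := |u|) (abs_nonneg u) k
    have h3 : Real.exp |u| ≤ Real.exp u + Real.exp (-u) := Real.exp_abs_le u
    have h4 : (0 : ℝ) < k.factorial := by positivity
    calc |u| ^ k = (k.factorial : ℝ) * (|u| ^ k / (k.factorial : ℝ)) := by field_simp
      _ ≤ (k.factorial : ℝ) * (Real.exp u + Real.exp (-u)) := by
          exact mul_le_mul_of_nonneg_left (h2.trans h3) h4.le
  rw [hnorm]
  calc |u| ^ k * Real.exp (b ^ 2 - (u - a) ^ 2)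
      ≤ ((k.factorial : ℝ) * (Real.exp u + Real.exp (-u))) * Real.exp (b ^ 2 - (u - a) ^ 2) := by
        exact mul_le_mul_of_nonneg_right h1 (Real.exp_nonneg _)
    _ = (k.factorial : ℝ) * (Real.exp (-u ^ 2 + (2 * a + 1) * u + (b ^ 2 - a ^ 2))
        + Real.exp (-u ^ 2 + (2 * a - 1) * u + (b ^ 2 - a ^ 2))) := by
        rw [mul_assoc, add_mul, ← Real.exp_add, ← Real.exp_add]
        ring_nf

lemma integrable_poly_mul_cexp (P : Polynomial ℝ) (w : ℂ) :
    Integrable (fun u : ℝ => ((P.eval u : ℝ) : ℂ) * cexp (-((u : ℂ) - w) ^ 2)) := by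
  induction P using Polynomial.induction_on' with
  | add p q hp hq =>
      refine (hp.add hq).congr (Filter.Eventually.of_forall fun u => ?_)
      simp only [Pi.add_apply, Polynomial.eval_add, Complex.ofReal_add, add_mul]
  | monomial m a =>
      refine ((integrable_pow_mul_cexp m w).const_mul (a : ℂ)).congr
        (Filter.Eventually.of_forall fun u => ?_)
      push_cast [Polynomial.eval_monomial]
      ring

lemma physHermite_succ (n : ℕ) :
    physHermite (n + 1)
      = 2 * Polynomial.X * physHermite n - Polynomial.derivative (physHermite n) := rfl

lemma integral_hermite_mul_cexp (w : ℂ) (n : ℕ) :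
    ∫ u : ℝ, (((physHermite n).eval u : ℝ) : ℂ) * cexp (-((u : ℂ) - w) ^ 2)
      = (Real.sqrt Real.pi : ℂ) * (2 * w) ^ n := by
  induction n with
  | zero =>
      have h : ∀ u : ℝ, -((u : ℂ) - w) ^ 2
          = (-1) * (u : ℂ) ^ 2 + (2 * w) * (u : ℂ) + (-w ^ 2) := fun u => by ring
      simp only [physHermite, Polynomial.eval_one, Complex.ofReal_one, one_mul, pow_zero,
        mul_one]
      rw [show (fun u : ℝ => cexp (-((u : ℂ) - w) ^ 2))
          = fun u : ℝ => cexp ((-1) * (u : ℂ) ^ 2 + (2 * w) * (u : ℂ) + (-w ^ 2)) from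
          funext fun u => by rw [h u]]
      rw [integral_cexp_quadratic (by norm_num) (2 * w) (-w ^ 2)]
      have h1 : (-w ^ 2 - (2 * w) ^ 2 / (4 * (-1)) : ℂ) = 0 := by ring
      have h2 : ((Real.pi : ℂ) / -(-1)) = (Real.pi : ℂ) := by ring
      rw [h1, h2, Complex.exp_zero, mul_one]
      rw [Real.sqrt_eq_rpow, Complex.ofReal_cpow Real.pi_pos.le]
      norm_num
  | succ n ih =>
      set P := physHermite n with hP
      set e : ℝ → ℂ := fun u => cexp (-((u : ℂ) - w) ^ 2) with he_def
      set g' : ℝ → ℂ := fun x => ((P.derivative.eval x : ℝ) : ℂ) * e x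
        + ((P.eval x : ℝ) : ℂ) * (-(2 * ((x : ℂ) - w)) * e x) with hg'_def
      have hderiv : ∀ x : ℝ, HasDerivAt (fun u : ℝ => ((P.eval u : ℝ) : ℂ) * e u) (g' x) x := by
        intro x
        have h0 : HasDerivAt (fun y : ℝ => (y : ℂ)) 1 x := (hasDerivAt_id x).ofReal_comp
        have hinner : HasDerivAt (fun u : ℝ => -((u : ℂ) - w) ^ 2) (-(2 * ((x : ℂ) - w))) x := by
          have h1 : HasDerivAt (fun u : ℝ => ((u : ℂ) - w) ^ 2) (2 * ((x : ℂ) - w)) x := by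
            have := ((h0.sub_const w).mul (h0.sub_const w))
            have h2 : (fun u : ℝ => ((u : ℂ) - w) * ((u : ℂ) - w))
                = fun u : ℝ => ((u : ℂ) - w) ^ 2 := funext fun u => by ring
            simp only [Pi.mul_def] at this
            rw [h2] at this
            refine this.congr_deriv ?_
            ring
          exact h1.neg
        have hE : HasDerivAt e (-(2 * ((x : ℂ) - w)) * e x) x := by
          simpa [he_def, mul_comm] using hinner.cexp
        have hp : HasDerivAt (fun u : ℝ => ((P.eval u : ℝ) : ℂ))
            ((P.derivative.eval x : ℝ) : ℂ) x := (P.hasDerivAt x).ofReal_comp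
        exact hp.mul hE
      have hint : ∀ Q : Polynomial ℝ,
          Integrable (fun u : ℝ => ((Q.eval u : ℝ) : ℂ) * e u) :=
        fun Q => integrable_poly_mul_cexp Q w
      have hintg' : Integrable g' := by
        have : g' = fun x => (((P.derivative.eval x : ℝ) : ℂ) * e x
            - 2 * ((((Polynomial.X * P).eval x : ℝ)) : ℂ) * e x)
            + (2 * w) * (((P.eval x : ℝ) : ℂ) * e x) := by
          funext x
          simp only [hg'_def, Polynomial.eval_mul, Polynomial.eval_X]
          push_cast
          ring
        rw [this]
        exact (((hint P.derivative).sub (((hint (Polynomial.X * P)).const_mul 2).congr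
          (Filter.Eventually.of_forall fun x => by ring))).add ((hint P).const_mul (2 * w)))
      have hzero : ∫ x : ℝ, g' x = 0 :=
        integral_eq_zero_of_hasDerivAt_of_integrable hderiv hintg' (hint P)
      have hsplit : ∀ x : ℝ, (((physHermite (n + 1)).eval x : ℝ) : ℂ) * e x
          = (2 * w) * (((P.eval x : ℝ) : ℂ) * e x) - g' x := by
        intro x
        rw [physHermite_succ]
        simp only [hg'_def, Polynomial.eval_sub, Polynomial.eval_mul, Polynomial.eval_X,
          Polynomial.eval_ofNat]
        push_cast
        ring
      rw [show (fun x : ℝ => (((physHermite (n + 1)).eval x : ℝ) : ℂ) * e x)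
          = fun x : ℝ => (2 * w) * (((P.eval x : ℝ) : ℂ) * e x) - g' x from funext hsplit]
      rw [integral_sub (((hint P).const_mul (2 * w))) hintg', hzero,
        MeasureTheory.integral_const_mul, ih]
      ring

lemma rbf_const_eq (γ : ℝ) (hγ : 0 < γ) (n : ℕ) :
    (2 / (Real.pi * γ ^ 2)) ^ ((1 : ℝ) / 4) * ((2 / γ ^ 2 / Real.pi) ^ ((1 : ℝ) / 4)
        * (Real.sqrt (2 ^ n * n.factorial))⁻¹)
      * ((Real.sqrt 2 / γ)⁻¹ * (Real.sqrt Real.pi * (2 / γ) ^ n))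
    = Real.sqrt (2 ^ n / (γ ^ (2 * n) * n.factorial)) := by
  have hπ := Real.pi_pos
  have hbase : (2 / γ ^ 2 / Real.pi) = (2 / (Real.pi * γ ^ 2)) := by ring
  have hpos : (0 : ℝ) < 2 / (Real.pi * γ ^ 2) := by positivity
  rw [hbase]
  have hA : ((2 / (Real.pi * γ ^ 2)) ^ ((1 : ℝ) / 4)) ^ 2
      = Real.sqrt (2 / (Real.pi * γ ^ 2)) := by
    rw [← Real.rpow_natCast ((2 / (Real.pi * γ ^ 2)) ^ ((1 : ℝ) / 4)) 2,
      ← Real.rpow_mul hpos.le, Real.sqrt_eq_rpow]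
    norm_num
  have hB : (Real.sqrt (2 ^ n * n.factorial))⁻¹
      = Real.sqrt ((2 ^ n * (n.factorial : ℝ))⁻¹) := by
    rw [Real.sqrt_inv]
  have hC : (Real.sqrt 2 / γ)⁻¹ = Real.sqrt (γ ^ 2 / 2) := by
    rw [Real.sqrt_div (sq_nonneg γ), Real.sqrt_sq hγ.le, inv_div]
  have hE : ((2 : ℝ) / γ) ^ n = Real.sqrt ((4 / γ ^ 2) ^ n) := by
    have h1 : ((4 : ℝ) / γ ^ 2) ^ n = (((2 : ℝ) / γ) ^ n) ^ 2 := by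
      rw [← pow_mul, mul_comm n 2, pow_mul]
      congr 1
      ring
    rw [h1, Real.sqrt_sq (by positivity)]
  calc (2 / (Real.pi * γ ^ 2)) ^ ((1 : ℝ) / 4) * ((2 / (Real.pi * γ ^ 2)) ^ ((1 : ℝ) / 4)
        * (Real.sqrt (2 ^ n * n.factorial))⁻¹)
      * ((Real.sqrt 2 / γ)⁻¹ * (Real.sqrt Real.pi * (2 / γ) ^ n))
      = ((2 / (Real.pi * γ ^ 2)) ^ ((1 : ℝ) / 4)) ^ 2 * ((Real.sqrt (2 ^ n * n.factorial))⁻¹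
        * ((Real.sqrt 2 / γ)⁻¹ * (Real.sqrt Real.pi * (2 / γ) ^ n))) := by ring
    _ = Real.sqrt (2 / (Real.pi * γ ^ 2)) * (Real.sqrt ((2 ^ n * (n.factorial : ℝ))⁻¹)
        * (Real.sqrt (γ ^ 2 / 2) * (Real.sqrt Real.pi * Real.sqrt ((4 / γ ^ 2) ^ n)))) := by
      rw [hA, hB, hC, hE]
    _ = Real.sqrt (2 / (Real.pi * γ ^ 2) * ((2 ^ n * (n.factorial : ℝ))⁻¹
        * (γ ^ 2 / 2 * (Real.pi * (4 / γ ^ 2) ^ n)))) := by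
      rw [← Real.sqrt_mul Real.pi_pos.le, ← Real.sqrt_mul (by positivity : (0:ℝ) ≤ γ ^ 2 / 2),
        ← Real.sqrt_mul (by positivity : (0:ℝ) ≤ (2 ^ n * (n.factorial : ℝ))⁻¹),
        ← Real.sqrt_mul hpos.le]
    _ = Real.sqrt (2 ^ n / (γ ^ (2 * n) * n.factorial)) := by
      congr 1
      have hfac : (0 : ℝ) < n.factorial := by positivity
      field_simp
      rw [show (4 : ℝ) = 2 ^ 2 by norm_num, ← pow_mul]
      rw [div_pow, ← pow_mul, ← pow_mul, div_mul_cancel₀ _ (pow_ne_zero _ hγ.ne')]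
      ring

theorem rbfSB_hermite (γ : ℝ) (hγ : 0 < γ) (α : ℝ) (hα : α = 2 / γ ^ 2) (n : ℕ) (z : ℂ) :
    rbfSB γ (fun x => (hermiteFun α n x : ℂ)) z = rbfBasis γ n z := by
  subst hα
  have hγ0 : (γ : ℂ) ≠ 0 := Complex.ofReal_ne_zero.mpr hγ.ne'
  have hs2 : Real.sqrt 2 ^ 2 = 2 := Real.sq_sqrt (by norm_num)
  have hs2c : ((Real.sqrt 2 : ℝ) : ℂ) ^ 2 = 2 := by
    rw [← Complex.ofReal_pow, hs2]; norm_num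
  have hspos : (0 : ℝ) < Real.sqrt 2 := Real.sqrt_pos.mpr (by norm_num)
  have hsqα : Real.sqrt (2 / γ ^ 2) = Real.sqrt 2 / γ := by
    rw [Real.sqrt_div (by norm_num : (0:ℝ) ≤ 2), Real.sqrt_sq hγ.le]
  have key : ∀ x : ℝ,
      cexp (-((x : ℂ) - (Real.sqrt 2 : ℂ) * z) ^ 2 / (γ : ℂ) ^ 2)
          * ((hermiteFun (2 / γ ^ 2) n x : ℝ) : ℂ)
        = (((2 / γ ^ 2 / Real.pi) ^ ((1 : ℝ) / 4)
            * (Real.sqrt (2 ^ n * n.factorial))⁻¹ : ℝ) : ℂ)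
          * cexp (-z ^ 2 / (γ : ℂ) ^ 2)
          * ((((physHermite n).eval (Real.sqrt 2 / γ * x) : ℝ) : ℂ)
            * cexp (-(((Real.sqrt 2 / γ * x : ℝ) : ℂ) - z / γ) ^ 2)) := by
    intro x
    unfold hermiteFun
    rw [hsqα]
    push_cast
    have hcollect : cexp (-((x:ℂ) - ↑(Real.sqrt 2) * z) ^ 2 / (γ:ℂ) ^ 2)
        * cexp (-(2 / (γ:ℂ) ^ 2) * (x:ℂ) ^ 2 / 2)
        = cexp (-z ^ 2 / (γ:ℂ) ^ 2) * cexp (-(↑(Real.sqrt 2) / (γ:ℂ) * (x:ℂ) - z / (γ:ℂ)) ^ 2) := by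
      rw [← Complex.exp_add, ← Complex.exp_add]
      congr 1
      field_simp
      linear_combination ((x:ℂ) ^ 2 - z ^ 2) * hs2c
    linear_combination ((((2 / γ ^ 2 / Real.pi) ^ ((1:ℝ) / 4) : ℝ) : ℂ)
        * ((Real.sqrt (2 ^ n * n.factorial) : ℝ) : ℂ)⁻¹
        * ((Polynomial.eval (Real.sqrt 2 / γ * x) (physHermite n) : ℝ) : ℂ)) * hcollect
  unfold rbfSB rbfBasis
  rw [show (fun x : ℝ => cexp (-((x : ℂ) - (Real.sqrt 2 : ℂ) * z) ^ 2 / (γ : ℂ) ^ 2)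
        * ((hermiteFun (2 / γ ^ 2) n x : ℝ) : ℂ)) = fun x : ℝ =>
        (((2 / γ ^ 2 / Real.pi) ^ ((1 : ℝ) / 4)
            * (Real.sqrt (2 ^ n * n.factorial))⁻¹ : ℝ) : ℂ)
          * cexp (-z ^ 2 / (γ : ℂ) ^ 2)
          * ((((physHermite n).eval (Real.sqrt 2 / γ * x) : ℝ) : ℂ)
            * cexp (-(((Real.sqrt 2 / γ * x : ℝ) : ℂ) - z / γ) ^ 2)) from funext key]
  rw [MeasureTheory.integral_const_mul]
  rw [MeasureTheory.Measure.integral_comp_mul_left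
    (fun t : ℝ => (((physHermite n).eval t : ℝ) : ℂ) * cexp (-((t : ℂ) - z / γ) ^ 2))
    (Real.sqrt 2 / γ)]
  rw [integral_hermite_mul_cexp (z / γ) n]
  rw [Complex.real_smul, abs_of_pos (by positivity : (0:ℝ) < (Real.sqrt 2 / γ)⁻¹)]
  rw [← rbf_const_eq γ hγ n]
  push_cast
  ring
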